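/- Let Ω ⊆ ℝ^N be a bounded open set. For each n let (y_n, D_n, f_n) be an admissible deformation triple on Ω, and let (y, D, f) be an admissible deformation triple on Ω. Assume that y_n → y almost everywhere in Ω and that x ↦ det(f_n x) converges weakly in L¹(Ω) to x ↦ det(f x). Then for every measurable set E ⊆ Ω the extended inverse maps converge in L¹(ℝ^N; ℝ^N): ∫⁻_{ℝ^N} ‖F_n(ξ) − F(ξ)‖ dξ → 0 as n → ∞ (lower Lebesgue integral of the extended-real-valued norm), where F_n(ξ) := Function.invFunOn y_n D_n (ξ) if ξ ∈ y_n(E ∩ D_n) and F_n(ξ) := 0 otherwise, and F(ξ) := Function.invFunOn y D (ξ) if ξ ∈ y(E ∩ D) and F(ξ) := 0 otherwise. (This is the statement χ_{im_G(y_n,E)} y_n⁻¹ → χ_{im_G(y,E)} y⁻¹ in L¹(ℝ^N; ℝ^N).) -/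

import Mathlib

open MeasureTheory Filter Topology Set
open scoped ENNReal NNReal

noncomputable section

abbrev Euc (N : ℕ) := EuclideanSpace ℝ (Fin N)

/-- An a.e. approximately differentiable map on `A`, encoded as a triple `(u, D, f)`. -/
def ApproxDiffTriple {N : ℕ} (A D : Set (Euc N)) (u : Euc N → Euc N)
    (f : Euc N → Euc N →L[ℝ] Euc N) : Prop :=
  MeasurableSet D ∧ D ⊆ A ∧ volume (A \ D) = 0 ∧ ∀ x ∈ D, HasFDerivWithinAt u (f x) D x

/-- An admissible deformation on `Ω` (the class `𝒴(Ω)` of the paper). -/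
def AdmissibleDef {N : ℕ} (Ω D : Set (Euc N)) (y : Euc N → Euc N)
    (f : Euc N → Euc N →L[ℝ] Euc N) : Prop :=
  ApproxDiffTriple Ω D y f ∧ Set.InjOn y D ∧ (∀ x ∈ D, 0 < (f x).det) ∧
    IntegrableOn (fun x => (f x).det) Ω volume

/-- Weak convergence in `L¹(Ω)`, tested against bounded measurable functions. -/
def WeakL1ConvOn {N : ℕ} (Ω : Set (Euc N)) (u : ℕ → Euc N → ℝ) (v : Euc N → ℝ) : Prop :=
  ∀ g : Euc N → ℝ, Measurable g → (∃ C : ℝ, ∀ x, |g x| ≤ C) →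
    Tendsto (fun n => ∫ x in Ω, u n x * g x) atTop (𝓝 (∫ x in Ω, v x * g x))




namespace InvConv

variable {N : ℕ} {Ω D : Set (Euc N)} {y : Euc N → Euc N} {f : Euc N → Euc N →L[ℝ] Euc N}

lemma contOn (h : AdmissibleDef Ω D y f) : ContinuousOn y D :=
  fun x hx => (h.1.2.2.2 x hx).continuousWithinAt

lemma cov (h : AdmissibleDef Ω D y f) {s : Set (Euc N)} (hs : MeasurableSet s) (hsD : s ⊆ D)
    (Φ : Euc N → ℝ≥0∞) :
    ∫⁻ ξ in y '' s, Φ ξ = ∫⁻ x in s, ENNReal.ofReal ((f x).det) * Φ (y x) := by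
  rw [lintegral_image_eq_lintegral_abs_det_fderiv_mul volume hs
    (fun x hx => (h.1.2.2.2 x (hsD hx)).mono hsD) (h.2.1.mono hsD) Φ]
  refine setLIntegral_congr_fun hs (fun x hx => ?_)
  rw [abs_of_pos (h.2.2.1 x (hsD hx))]

lemma image_meas (h : AdmissibleDef Ω D y f) {s : Set (Euc N)} (hs : MeasurableSet s)
    (hsD : s ⊆ D) : MeasurableSet (y '' s) :=
  hs.image_of_continuousOn_injOn ((contOn h).mono hsD) (h.2.1.mono hsD)

lemma left_inv (h : AdmissibleDef Ω D y f) {x : Euc N} (hx : x ∈ D) :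
    Function.invFunOn y D (y x) = x :=
  h.2.1.leftInvOn_invFunOn hx

lemma inv_mem (h : AdmissibleDef Ω D y f) {s : Set (Euc N)} (hsD : s ⊆ D) {ξ : Euc N}
    (hξ : ξ ∈ y '' s) : Function.invFunOn y D ξ ∈ D :=
  Function.invFunOn_mem (by rcases hξ with ⟨a, ha, rfl⟩; exact ⟨a, hsD ha, rfl⟩)

open Classical in
lemma measurable_inv (h : AdmissibleDef Ω D y f) {s : Set (Euc N)} (hs : MeasurableSet s)
    (hsD : s ⊆ D) : Measurable ((y '' s).indicator (Function.invFunOn y D)) := by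
  intro t ht
  have key : (y '' s).indicator (Function.invFunOn y D) ⁻¹' t
      = (y '' (s ∩ t)) ∪ ((y '' s)ᶜ ∩ (if (0 : Euc N) ∈ t then Set.univ else ∅)) := by
    ext ξ
    by_cases hξ : ξ ∈ y '' s
    · simp only [Set.mem_preimage, Set.indicator_of_mem hξ, Set.mem_union, Set.mem_inter_iff,
        Set.mem_compl_iff, hξ, not_true, false_and, or_false]
      rcases hξ with ⟨a, ha, rfl⟩
      rw [left_inv h (hsD ha)]
      constructor
      · intro hmem
        exact ⟨a, ⟨ha, hmem⟩, rfl⟩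
      · rintro ⟨b, ⟨hb, hbt⟩, hba⟩
        rwa [← h.2.1 (hsD hb) (hsD ha) hba]
    · simp only [Set.mem_preimage, Set.indicator_of_notMem hξ, Set.mem_union, Set.mem_inter_iff,
        Set.mem_compl_iff, hξ, not_false_iff, true_and]
      constructor
      · intro h0
        right
        simp only [if_pos h0]
        trivial
      · rintro (⟨a, ⟨ha, _⟩, rfl⟩ | hmem)
        · exact absurd ⟨a, ha, rfl⟩ hξ
        · by_cases h0 : (0 : Euc N) ∈ t
          · exact h0
          · simp only [if_neg h0, Set.mem_empty_iff_false] at hmem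
  rw [key]
  refine ((image_meas h (hs.inter ht) (fun x hx => hsD hx.1))).union
    (((image_meas h hs hsD).compl).inter ?_)
  split <;> simp


variable {N : ℕ}

/-- If `wₙ ⇀ w₀` weakly in `L¹(Ω)` and `hₙ → h₀` a.e. with a uniform bound, then
`∫ hₙ wₙ → ∫ h₀ w₀`. -/
lemma key_limit {Ω : Set (Euc N)} (hΩm : MeasurableSet Ω) (hfin : volume Ω ≠ ∞)
    {w : ℕ → Euc N → ℝ} {w₀ : Euc N → ℝ}
    (hwint : ∀ n, IntegrableOn (w n) Ω volume) (hw₀int : IntegrableOn w₀ Ω volume)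
    (hnn : ∀ n, ∀ᵐ x ∂(volume.restrict Ω), 0 ≤ w n x)
    (hweak : ∀ g : Euc N → ℝ, Measurable g → (∃ C : ℝ, ∀ x, |g x| ≤ C) →
      Tendsto (fun n => ∫ x in Ω, w n x * g x) atTop (𝓝 (∫ x in Ω, w₀ x * g x)))
    {h : ℕ → Euc N → ℝ} {h₀ : Euc N → ℝ} {C : ℝ} (hC : 0 ≤ C)
    (hmeas : ∀ n, AEMeasurable (h n) (volume.restrict Ω))
    (hbd : ∀ n x, |h n x| ≤ C)
    (htend : ∀ᵐ x ∂(volume.restrict Ω), Tendsto (fun n => h n x) atTop (𝓝 (h₀ x))) :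
    Tendsto (fun n => ∫ x in Ω, h n x * w n x) atTop (𝓝 (∫ x in Ω, h₀ x * w₀ x)) := by
  set μ := volume.restrict Ω with hμ
  haveI : IsFiniteMeasure μ := ⟨by rwa [Measure.restrict_apply_univ, lt_top_iff_ne_top]⟩
  have h₀ae : AEMeasurable h₀ μ := aemeasurable_of_tendsto_metrizable_ae atTop hmeas htend
  have h₀bd : ∀ᵐ x ∂μ, |h₀ x| ≤ C := by
    filter_upwards [htend] with x hx
    exact le_of_tendsto hx.abs (Eventually.of_forall fun n => hbd n x)
  -- a globally bounded measurable version of h₀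
  set h₀b : Euc N → ℝ := fun x => max (-C) (min (h₀ae.mk h₀ x) C) with hh₀b_def
  have hh₀b_meas : Measurable h₀b :=
    (measurable_const.max (h₀ae.measurable_mk.min measurable_const))
  have hh₀b_bd : ∀ x, |h₀b x| ≤ C := by
    intro x
    rw [abs_le]
    constructor
    · exact le_max_left _ _
    · exact max_le (by linarith) (min_le_right _ _)
  have hh₀b_ae : h₀ =ᵐ[μ] h₀b := by
    filter_upwards [h₀ae.ae_eq_mk, h₀bd] with x hx hbx
    rw [hh₀b_def]
    simp only [← hx]
    rw [abs_le] at hbx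
    rw [min_eq_left hbx.2, max_eq_right hbx.1]
  -- basic integrabilities
  have Ihw : ∀ n, Integrable (fun x => h n x * w n x) μ := fun n =>
    (hwint n).bdd_mul ((hmeas n).aestronglyMeasurable)
      (Eventually.of_forall fun x => by simpa [Real.norm_eq_abs] using hbd n x)
  have Ih₀w : Integrable (fun x => h₀ x * w₀ x) μ :=
    hw₀int.bdd_mul h₀ae.aestronglyMeasurable
      (by filter_upwards [h₀bd] with x hx; simpa [Real.norm_eq_abs] using hx)
  -- limit for total masses
  have Btend : Tendsto (fun n => ∫ x in Ω, w n x) atTop (𝓝 (∫ x in Ω, w₀ x)) := by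
    have := hweak (fun _ => (1 : ℝ)) measurable_const ⟨1, fun x => by norm_num⟩
    simpa using this
  set B := ∫ x in Ω, w₀ x with hB
  rw [Metric.tendsto_nhds]
  intro ε hε
  set ε₁ := min 1 (ε / (4 * C + |B| + 4)) with hε₁def
  have hden : (0:ℝ) < 4 * C + |B| + 4 := by positivity
  have hε₁ : 0 < ε₁ := lt_min one_pos (by positivity)
  have hε₁le : ε₁ ≤ 1 := min_le_left _ _
  have hε₁le' : ε₁ ≤ ε / (4 * C + |B| + 4) := min_le_right _ _
  -- absolute continuity for w₀
  obtain ⟨δ, hδpos, hδ⟩ := exists_pos_setLIntegral_lt_of_measure_lt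
    (μ := μ) (f := fun x => (‖w₀ x‖₊ : ℝ≥0∞)) hw₀int.2.ne
    (ε := ENNReal.ofReal ε₁) (ENNReal.ofReal_pos.2 hε₁).ne'
  obtain ⟨δ', hδ'0, hδ'⟩ : ∃ d : ℝ, 0 < d ∧ ENNReal.ofReal d < δ := by
    rcases exists_between hδpos with ⟨c, hc0, hcδ⟩
    have hcne : c ≠ ⊤ := (hcδ.trans_le le_top).ne
    exact ⟨c.toReal, ENNReal.toReal_pos hc0.ne' hcne,
      by rwa [ENNReal.ofReal_toReal hcne]⟩
  -- Egorov
  have hmk_ae : ∀ᵐ x ∂μ, ∀ n, h n x = (hmeas n).mk (h n) x :=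
    ae_all_iff.2 fun n => (hmeas n).ae_eq_mk
  obtain ⟨A, hAm, hAμ, hAu⟩ := tendstoUniformlyOn_of_ae_tendsto' (μ := μ)
    (f := fun n => (hmeas n).mk (h n)) (g := h₀b)
    (fun n => ((hmeas n).measurable_mk).stronglyMeasurable)
    hh₀b_meas.stronglyMeasurable
    (by
      filter_upwards [htend, hh₀b_ae, hmk_ae] with x hx hbx hmkx
      rw [← hbx]
      exact hx.congr fun n => hmkx n) hδ'0
  have hAδ : μ A < δ := lt_of_le_of_lt hAμ hδ'
  -- test functions
  set gA : Euc N → ℝ := A.indicator (fun _ => (1:ℝ)) with hgA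
  have hgAmeas : Measurable gA := measurable_const.indicator hAm
  have hgAbd : ∀ x, |gA x| ≤ 1 := fun x => by
    by_cases hx : x ∈ A <;> simp [hgA, hx]
  have hgA01 : ∀ x, 0 ≤ gA x ∧ gA x ≤ 1 := fun x => by
    by_cases hx : x ∈ A <;> simp [hgA, hx]
  set ht : Euc N → ℝ := Aᶜ.indicator h₀b with hht
  have hhtmeas : Measurable ht := hh₀b_meas.indicator hAm.compl
  have hhtbd : ∀ x, |ht x| ≤ C := fun x => by
    by_cases hx : x ∈ Aᶜ <;> simp [hht, hx, hh₀b_bd x, abs_of_nonneg, hC]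
  -- weak convergence against ht and gA
  have W2 : Tendsto (fun n => ∫ x in Ω, w n x * ht x) atTop (𝓝 (∫ x in Ω, w₀ x * ht x)) :=
    hweak ht hhtmeas ⟨C, hhtbd⟩
  have W3 : Tendsto (fun n => ∫ x in Ω, w n x * gA x) atTop (𝓝 (∫ x in Ω, w₀ x * gA x)) :=
    hweak gA hgAmeas ⟨1, hgAbd⟩
  -- ∫ gA |w₀| is small
  have hsmall : ∫ x in Ω, gA x * |w₀ x| < ε₁ := by
    have hinteq : ∫ x in Ω, gA x * |w₀ x| =
        (∫⁻ x, ENNReal.ofReal (gA x * |w₀ x|) ∂μ).toReal := by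
      rw [← hμ]
      exact integral_eq_lintegral_of_nonneg_ae
        (Eventually.of_forall fun x => mul_nonneg (hgA01 x).1 (abs_nonneg _))
        (hgAmeas.aestronglyMeasurable.mul hw₀int.abs.aestronglyMeasurable)
    have hlint : (∫⁻ x, ENNReal.ofReal (gA x * |w₀ x|) ∂μ) = ∫⁻ x in A, ‖w₀ x‖₊ ∂μ := by
      rw [← lintegral_indicator hAm]
      refine lintegral_congr fun x => ?_
      by_cases hx : x ∈ A
      · simp [hgA, hx]
        exact (Real.enorm_eq_ofReal_abs _).symm
      · simp [hgA, hx]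
    rw [hinteq, hlint]
    exact ENNReal.toReal_lt_of_lt_ofReal (hδ A hAδ)
  -- eventual facts
  have EV1 : ∀ᶠ n in atTop, |(∫ x in Ω, w n x) - B| < ε₁ := by
    have := (Metric.tendsto_nhds.1 Btend) ε₁ hε₁
    simpa [Real.dist_eq] using this
  have EV2 : ∀ᶠ n in atTop,
      |(∫ x in Ω, w n x * ht x) - ∫ x in Ω, w₀ x * ht x| < ε₁ := by
    have := (Metric.tendsto_nhds.1 W2) ε₁ hε₁
    simpa [Real.dist_eq] using this
  have EV3 : ∀ᶠ n in atTop,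
      |(∫ x in Ω, w n x * gA x) - ∫ x in Ω, w₀ x * gA x| < ε₁ := by
    have := (Metric.tendsto_nhds.1 W3) ε₁ hε₁
    simpa [Real.dist_eq] using this
  have EV4 : ∀ᶠ n in atTop, ∀ x ∈ Aᶜ, dist (h₀b x) ((hmeas n).mk (h n) x) < ε₁ :=
    (Metric.tendstoUniformlyOn_iff.1 hAu) ε₁ hε₁
  -- auxiliary integrabilities
  have IgAw0 : Integrable (fun x => gA x * |w₀ x|) μ :=
    hw₀int.abs.bdd_mul hgAmeas.aestronglyMeasurable
      (Eventually.of_forall fun x => by simpa [Real.norm_eq_abs] using hgAbd x)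
  have Ihtw : ∀ n, Integrable (fun x => w n x * ht x) μ := fun n =>
    ((hwint n).bdd_mul hhtmeas.aestronglyMeasurable
      (Eventually.of_forall fun x => by simpa [Real.norm_eq_abs] using hhtbd x)).congr
      (Eventually.of_forall fun x => mul_comm _ _)
  have Iw₀ht : Integrable (fun x => w₀ x * ht x) μ :=
    (hw₀int.bdd_mul hhtmeas.aestronglyMeasurable
      (Eventually.of_forall fun x => by simpa [Real.norm_eq_abs] using hhtbd x)).congr
      (Eventually.of_forall fun x => mul_comm _ _)
  have Iwa : ∀ n, Integrable (fun x => w n x * gA x) μ := fun n =>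
    ((hwint n).bdd_mul hgAmeas.aestronglyMeasurable
      (Eventually.of_forall fun x => by simpa [Real.norm_eq_abs] using hgAbd x)).congr
      (Eventually.of_forall fun x => mul_comm _ _)
  -- |∫ w₀ gA| is small
  have hCA : |∫ x in Ω, w₀ x * gA x| ≤ ∫ x in Ω, gA x * |w₀ x| := by
    rw [← Real.norm_eq_abs]
    refine norm_integral_le_of_norm_le IgAw0 (Eventually.of_forall fun x => ?_)
    rw [Real.norm_eq_abs, abs_mul, abs_of_nonneg (hgA01 x).1, mul_comm]
  -- third term bound
  have hT3 : |∫ x in Ω, (ht x - h₀ x) * w₀ x| ≤ C * ∫ x in Ω, gA x * |w₀ x| := by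
    rw [← Real.norm_eq_abs]
    have : C * ∫ x in Ω, gA x * |w₀ x| = ∫ x in Ω, C * (gA x * |w₀ x|) := by
      rw [integral_const_mul]
    rw [this]
    refine norm_integral_le_of_norm_le (IgAw0.const_mul C) ?_
    filter_upwards [hh₀b_ae, h₀bd] with x hx hbx
    by_cases hxA : x ∈ A
    · have hht0 : ht x = 0 := by simp [hht, Set.indicator_of_notMem, hxA]
      have hgA1 : gA x = 1 := by simp [hgA, hxA]
      rw [hht0, hgA1, Real.norm_eq_abs, zero_sub, abs_mul, abs_neg, one_mul]
      exact mul_le_mul_of_nonneg_right hbx (abs_nonneg _)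
    · have hht1 : ht x = h₀ x := by
        rw [hht]
        simp only [Set.indicator_of_mem (Set.mem_compl hxA)]
        exact hx.symm
      have hgA0 : gA x = 0 := by simp [hgA, hxA]
      rw [hht1, sub_self, zero_mul, norm_zero, hgA0, zero_mul, mul_zero]
  -- integral of |w n| bounds
  have Iw : ∀ n, IntegrableOn (w n) Ω volume := hwint
  -- main eventual estimate
  filter_upwards [EV1, EV2, EV3, EV4] with n h1 h2 h3 h4
  rw [Real.dist_eq]
  have Ih : Integrable (fun x => h n x * w n x) μ := Ihw n
  -- T1
  have hptw : ∀ᵐ x ∂μ, ‖(h n x - ht x) * w n x‖ ≤ (ε₁ + C * gA x) * w n x := by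
    filter_upwards [hnn n, hmk_ae] with x hwx hmkx
    rw [Real.norm_eq_abs, abs_mul, abs_of_nonneg hwx]
    refine mul_le_mul_of_nonneg_right ?_ hwx
    by_cases hxA : x ∈ A
    · have hht0 : ht x = 0 := by simp [hht, Set.indicator_of_notMem, hxA]
      have hgA1 : gA x = 1 := by simp [hgA, hxA]
      rw [hht0, hgA1, sub_zero, mul_one]
      have := hbd n x
      linarith [hε₁.le]
    · have hht1 : ht x = h₀b x := by
        rw [hht]; simp only [Set.indicator_of_mem (Set.mem_compl hxA)]
      have := h4 x (Set.mem_compl hxA)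
      rw [dist_comm, Real.dist_eq, ← hmkx n] at this
      rw [hht1]
      have hgA0 : gA x = 0 := by simp [hgA, hxA]
      rw [hgA0, mul_zero, add_zero]
      exact this.le
  have IG : Integrable (fun x => (ε₁ + C * gA x) * w n x) μ := by
    refine (hwint n).bdd_mul
      ((measurable_const.add (hgAmeas.const_mul C)).aestronglyMeasurable) (c := ε₁ + C) ?_
    refine Eventually.of_forall fun x => ?_
    rw [Real.norm_eq_abs, abs_of_nonneg (add_nonneg hε₁.le (mul_nonneg hC (hgA01 x).1))]
    exact add_le_add_right (mul_le_of_le_one_right hC (hgA01 x).2) _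
  have hT1 : |∫ x in Ω, (h n x - ht x) * w n x| ≤
      ε₁ * (∫ x in Ω, w n x) + C * ∫ x in Ω, w n x * gA x := by
    have step1 : ‖∫ x in Ω, (h n x - ht x) * w n x‖ ≤ ∫ x in Ω, (ε₁ + C * gA x) * w n x :=
      norm_integral_le_of_norm_le IG hptw
    rw [Real.norm_eq_abs] at step1
    refine step1.trans (le_of_eq ?_)
    have expand : ∀ x, (ε₁ + C * gA x) * w n x = ε₁ * w n x + C * (w n x * gA x) := by
      intro x; ring
    rw [integral_congr_ae (Eventually.of_forall expand),
      integral_add ((hwint n).const_mul ε₁) ((Iwa n).const_mul C),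
      integral_const_mul, integral_const_mul]
  -- numerical bounds
  have hwn_le : (∫ x in Ω, w n x) ≤ |B| + 1 := by
    have : (∫ x in Ω, w n x) - B ≤ |(∫ x in Ω, w n x) - B| := le_abs_self _
    have hB' : B ≤ |B| := le_abs_self _
    linarith [h1.le, hε₁le]
  have hwga : (∫ x in Ω, w n x * gA x) ≤ 2 * ε₁ := by
    have habs : (∫ x in Ω, w n x * gA x) - (∫ x in Ω, w₀ x * gA x) ≤
        |(∫ x in Ω, w n x * gA x) - ∫ x in Ω, w₀ x * gA x| := le_abs_self _
    have h2' : (∫ x in Ω, w₀ x * gA x) ≤ |∫ x in Ω, w₀ x * gA x| := le_abs_self _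
    linarith [h3.le, hCA, hsmall.le]
  have hwn_nonneg : 0 ≤ ∫ x in Ω, w n x := integral_nonneg_of_ae (hnn n)
  -- assemble
  have decomp : (∫ x in Ω, h n x * w n x) - ∫ x in Ω, h₀ x * w₀ x =
      (∫ x in Ω, (h n x - ht x) * w n x) +
      ((∫ x in Ω, w n x * ht x) - ∫ x in Ω, w₀ x * ht x) +
      (∫ x in Ω, (ht x - h₀ x) * w₀ x) := by
    have e1 : ∫ x in Ω, (h n x - ht x) * w n x =
        (∫ x in Ω, h n x * w n x) - ∫ x in Ω, w n x * ht x := by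
      rw [← integral_sub Ih (Ihtw n)]
      refine integral_congr_ae (Eventually.of_forall fun x => by ring)
    have e3 : ∫ x in Ω, (ht x - h₀ x) * w₀ x =
        (∫ x in Ω, w₀ x * ht x) - ∫ x in Ω, h₀ x * w₀ x := by
      rw [← integral_sub Iw₀ht Ih₀w]
      refine integral_congr_ae (Eventually.of_forall fun x => by ring)
    rw [e1, e3]; ring
  rw [decomp]
  have total : |(∫ x in Ω, (h n x - ht x) * w n x) +
      ((∫ x in Ω, w n x * ht x) - ∫ x in Ω, w₀ x * ht x) +
      (∫ x in Ω, (ht x - h₀ x) * w₀ x)| ≤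
      (ε₁ * (|B| + 1) + C * (2 * ε₁)) + ε₁ + C * ε₁ := by
    have tri := abs_add_le ((∫ x in Ω, (h n x - ht x) * w n x) +
      ((∫ x in Ω, w n x * ht x) - ∫ x in Ω, w₀ x * ht x))
      (∫ x in Ω, (ht x - h₀ x) * w₀ x)
    have tri2 := abs_add_le (∫ x in Ω, (h n x - ht x) * w n x)
      ((∫ x in Ω, w n x * ht x) - ∫ x in Ω, w₀ x * ht x)
    have b1 : |∫ x in Ω, (h n x - ht x) * w n x| ≤ ε₁ * (|B| + 1) + C * (2 * ε₁) := by
      exact hT1.trans (add_le_add (mul_le_mul_of_nonneg_left hwn_le hε₁.le)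
        (mul_le_mul_of_nonneg_left hwga hC))
    have b3 : |∫ x in Ω, (ht x - h₀ x) * w₀ x| ≤ C * ε₁ :=
      hT3.trans (mul_le_mul_of_nonneg_left hsmall.le hC)
    linarith [h2.le]
  refine lt_of_le_of_lt total ?_
  have key : ε₁ * (|B| + 3 * C + 2) < ε := by
    have hlt : |B| + 3 * C + 2 < 4 * C + |B| + 4 := by linarith
    have hnn2 : 0 ≤ |B| + 3 * C + 2 := by positivity
    calc ε₁ * (|B| + 3 * C + 2) ≤ (ε / (4 * C + |B| + 4)) * (|B| + 3 * C + 2) := by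
          exact mul_le_mul_of_nonneg_right hε₁le' hnn2
      _ < (ε / (4 * C + |B| + 4)) * (4 * C + |B| + 4) := by
          refine mul_lt_mul_of_pos_left hlt (by positivity)
      _ = ε := by field_simp
  have ringeq : (ε₁ * (|B| + 1) + C * (2 * ε₁)) + ε₁ + C * ε₁ = ε₁ * (|B| + 3 * C + 2) := by
    ring
  rw [ringeq]
  exact key



/-- If moreover `yₙ → y₀` a.e. and a.e. `y₀`-image of `E` avoids a closed set `Cs`, then the
mass that `yₙ` sends into `Cs` (weighted by `wₙ`) is eventually small. -/
lemma closed_small {Ω : Set (Euc N)} (hΩm : MeasurableSet Ω) (hfin : volume Ω ≠ ∞)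
    {w : ℕ → Euc N → ℝ} {w₀ : Euc N → ℝ}
    (hwint : ∀ n, IntegrableOn (w n) Ω volume) (hw₀int : IntegrableOn w₀ Ω volume)
    (hnn : ∀ n, ∀ᵐ x ∂(volume.restrict Ω), 0 ≤ w n x)
    (hweak : ∀ g : Euc N → ℝ, Measurable g → (∃ C : ℝ, ∀ x, |g x| ≤ C) →
      Tendsto (fun n => ∫ x in Ω, w n x * g x) atTop (𝓝 (∫ x in Ω, w₀ x * g x)))
    {yn : ℕ → Euc N → Euc N} {y₀ : Euc N → Euc N}
    (hymeas : ∀ n, AEMeasurable (yn n) (volume.restrict Ω))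
    (hytend : ∀ᵐ x ∂(volume.restrict Ω), Tendsto (fun n => yn n x) atTop (𝓝 (y₀ x)))
    {E : Set (Euc N)} (hE : MeasurableSet E)
    {Cs : Set (Euc N)} (hCs : IsClosed Cs)
    (hzero : ∀ᵐ x ∂(volume.restrict Ω), x ∈ E → y₀ x ∉ Cs)
    {θ : ℝ} (hθ : 0 < θ) :
    ∀ᶠ n in atTop, (∫ x in Ω,
      (E.indicator (fun x => Cs.indicator (fun _ => (1:ℝ)) (yn n x)) x) * w n x) < θ := by
  set μ := volume.restrict Ω with hμ
  by_cases hne : Cs.Nonempty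
  · -- continuous decreasing approximations of χ_Cs from above
    set φ : ℕ → Euc N → ℝ := fun k v => max 0 (1 - k * Metric.infDist v Cs) with hφdef
    have hφcont : ∀ k, Continuous (φ k) := fun k =>
      continuous_const.max (continuous_const.sub (continuous_const.mul (Metric.continuous_infDist_pt Cs)))
    have hφ0 : ∀ k v, 0 ≤ φ k v := fun k v => le_max_left _ _
    have hφ1 : ∀ k v, φ k v ≤ 1 := fun k v => max_le zero_le_one
      (by
        have := Metric.infDist_nonneg (x := v) (s := Cs)
        nlinarith [Nat.cast_nonneg (α := ℝ) k])
    have hφmem : ∀ k v, v ∈ Cs → φ k v = 1 := fun k v hv => by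
      rw [hφdef]
      simp [Metric.infDist_zero_of_mem hv]
    have hφtend : ∀ v, v ∉ Cs → Tendsto (fun k => φ k v) atTop (𝓝 0) := by
      intro v hv
      have hd : 0 < Metric.infDist v Cs := (hCs.notMem_iff_infDist_pos hne).1 hv
      have hev : ∀ᶠ k in atTop, φ k v = 0 := by
        refine eventually_atTop.2 ⟨⌈(Metric.infDist v Cs)⁻¹⌉₊, fun k hk => ?_⟩
        have h1 : (Metric.infDist v Cs)⁻¹ ≤ (k : ℝ) :=
          (Nat.le_ceil _).trans (by exact_mod_cast hk)
        have h2 : 1 ≤ (k : ℝ) * Metric.infDist v Cs := by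
          have h3 := mul_le_mul_of_nonneg_right h1 hd.le
          rw [inv_mul_cancel₀ hd.ne'] at h3
          linarith
        rw [hφdef]
        simp only
        rw [max_eq_left (by linarith)]
      exact Tendsto.congr' (by filter_upwards [hev] with k hk; exact hk.symm) tendsto_const_nhds
    have hy₀ae : AEMeasurable y₀ μ := aemeasurable_of_tendsto_metrizable_ae atTop hymeas hytend
    -- dominated convergence in k
    set F : ℕ → Euc N → ℝ := fun k x => (E.indicator (fun x => φ k (y₀ x)) x) * w₀ x with hF
    have hFtend : Tendsto (fun k => ∫ x in Ω, F k x) atTop (𝓝 (∫ (_ : Euc N) in Ω, (0:ℝ))) := by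
      refine tendsto_integral_of_dominated_convergence (fun x => |w₀ x|)
        (fun k => ?_) hw₀int.abs (fun k => ?_) ?_
      · exact ((((hφcont k).measurable.comp_aemeasurable hy₀ae).aestronglyMeasurable).indicator
          hE).mul hw₀int.aestronglyMeasurable
      · refine Eventually.of_forall fun x => ?_
        rw [Real.norm_eq_abs, abs_mul]
        by_cases hx : x ∈ E
        · simp only [Set.indicator_of_mem hx]
          rw [abs_of_nonneg (hφ0 _ _)]
          exact mul_le_of_le_one_left (abs_nonneg _) (hφ1 _ _)
        · simp [Set.indicator_of_notMem hx]
      · filter_upwards [hzero] with x hx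
        by_cases hxE : x ∈ E
        · simp only [hF, Set.indicator_of_mem hxE]
          have : Tendsto (fun k => φ k (y₀ x)) atTop (𝓝 0) := hφtend _ (hx hxE)
          simpa using this.mul_const (w₀ x)
        · simp [hF, Set.indicator_of_notMem hxE]
    rw [integral_zero] at hFtend
    obtain ⟨k₀, hk₀⟩ : ∃ k₀, (∫ x in Ω, F k₀ x) < θ / 2 := by
      have := (Metric.tendsto_nhds.1 hFtend) (θ / 2) (by linarith)
      rcases this.exists with ⟨k₀, hk₀⟩
      exact ⟨k₀, by rw [Real.dist_eq, sub_zero] at hk₀; exact (le_abs_self _).trans_lt hk₀⟩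
    -- key limit in n for φ k₀
    have hKL := key_limit hΩm hfin hwint hw₀int hnn hweak (C := 1) zero_le_one
      (h := fun n x => E.indicator (fun x => φ k₀ (yn n x)) x)
      (h₀ := fun x => E.indicator (fun x => φ k₀ (y₀ x)) x)
      (fun n => (((hφcont k₀).measurable.comp_aemeasurable (hymeas n)).indicator hE))
      (fun n x => by
        by_cases hx : x ∈ E
        · simp only [Set.indicator_of_mem hx]
          rw [abs_of_nonneg (hφ0 _ _)]; exact hφ1 _ _
        · simp [Set.indicator_of_notMem hx])
      (by
        filter_upwards [hytend] with x hx
        by_cases hxE : x ∈ E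
        · simp only [Set.indicator_of_mem hxE]
          exact ((hφcont k₀).tendsto _).comp hx
        · simp [Set.indicator_of_notMem hxE])
    have hev2 : ∀ᶠ n in atTop,
        (∫ x in Ω, (E.indicator (fun x => φ k₀ (yn n x)) x) * w n x) < θ := by
      have := (Metric.tendsto_nhds.1 hKL) (θ / 2) (by linarith)
      filter_upwards [this] with n hn
      rw [Real.dist_eq] at hn
      have : (∫ x in Ω, (E.indicator (fun x => φ k₀ (yn n x)) x) * w n x) -
          (∫ x in Ω, F k₀ x) < θ / 2 := (le_abs_self _).trans_lt hn
      linarith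
    filter_upwards [hev2] with n hn
    refine lt_of_le_of_lt ?_ hn
    refine integral_mono_ae ?_ ?_ ?_
    · exact (hwint n).bdd_mul (c := 1)
        (((measurable_const.indicator hCs.measurableSet).comp_aemeasurable (hymeas n))
          |>.indicator hE).aestronglyMeasurable
        (Eventually.of_forall fun x => by
          rw [Real.norm_eq_abs]
          by_cases hx : x ∈ E
          · simp only [Set.indicator_of_mem hx]
            by_cases hy : yn n x ∈ Cs <;> simp [hy]
          · simp [Set.indicator_of_notMem hx])
    · exact (hwint n).bdd_mul (c := 1)
        (((hφcont k₀).measurable.comp_aemeasurable (hymeas n)).indicator hE).aestronglyMeasurable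
        (Eventually.of_forall fun x => by
          rw [Real.norm_eq_abs]
          by_cases hx : x ∈ E
          · simp only [Set.indicator_of_mem hx]
            rw [abs_of_nonneg (hφ0 _ _)]; exact hφ1 _ _
          · simp [Set.indicator_of_notMem hx])
    · filter_upwards [hnn n] with x hwx
      refine mul_le_mul_of_nonneg_right ?_ hwx
      by_cases hx : x ∈ E
      · simp only [Set.indicator_of_mem hx]
        by_cases hy : yn n x ∈ Cs
        · rw [Set.indicator_of_mem hy, hφmem k₀ _ hy]
        · rw [Set.indicator_of_notMem hy]
          exact hφ0 _ _
      · simp [Set.indicator_of_notMem hx]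
  · -- Cs is empty
    rw [Set.not_nonempty_iff_eq_empty] at hne
    subst hne
    refine Eventually.of_forall fun n => ?_
    simpa using hθ


variable {N : ℕ}

lemma lint_mul_eq_ofReal {μ : Measure (Euc N)} {w φ : Euc N → ℝ}
    (hw : Integrable w μ) (hwnn : ∀ᵐ x ∂μ, 0 ≤ w x)
    (hφ : AEMeasurable φ μ) {C : ℝ} (hφnn : ∀ x, 0 ≤ φ x) (hφbd : ∀ x, φ x ≤ C) :
    ∫⁻ x, ENNReal.ofReal (w x) * ENNReal.ofReal (φ x) ∂μ
      = ENNReal.ofReal (∫ x, φ x * w x ∂μ) := by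
  have hint : Integrable (fun x => φ x * w x) μ :=
    hw.bdd_mul (c := C) hφ.aestronglyMeasurable
      (Eventually.of_forall fun x => by
        rw [Real.norm_eq_abs, abs_of_nonneg (hφnn x)]; exact hφbd x)
  have hnn' : 0 ≤ᵐ[μ] fun x => φ x * w x := by
    filter_upwards [hwnn] with x hx
    exact mul_nonneg (hφnn x) hx
  rw [ofReal_integral_eq_lintegral_ofReal hint hnn']
  refine lintegral_congr_ae ?_
  filter_upwards [hwnn] with x hx
  rw [mul_comm (φ x) (w x), ENNReal.ofReal_mul hx]

lemma setlint_sub {A Ω' : Set (Euc N)} (hA : MeasurableSet A) (hsub : A ⊆ Ω')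
    (F : Euc N → ℝ≥0∞) :
    ∫⁻ x in A, F x ∂volume = ∫⁻ x in Ω', A.indicator F x ∂volume := by
  rw [lintegral_indicator hA, Measure.restrict_restrict hA,
    Set.inter_eq_self_of_subset_left hsub]

/-- Bridge between set-Lebesgue integrals over `E ∩ Dn` and Bochner integrals over `Ω`. -/
lemma bridge {Ω Dn E : Set (Euc N)} (hΩm : MeasurableSet Ω) (hE : MeasurableSet E)
    (hEΩ : E ⊆ Ω) (hDnΩ : Dn ⊆ Ω) (hDnull : volume (Ω \ Dn) = 0)
    {w : Euc N → ℝ} (hwpos : ∀ x ∈ Dn, 0 ≤ w x) (hwint : IntegrableOn w Ω volume)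
    (q : Euc N → ℝ) (hq : AEMeasurable q (volume.restrict Ω)) {c : ℝ}
    (hqnn : ∀ x, 0 ≤ q x) (hqbd : ∀ x, q x ≤ c) :
    ∫⁻ x in E ∩ Dn, ENNReal.ofReal (w x) * ENNReal.ofReal (q x) ∂volume
      = ENNReal.ofReal (∫ x in Ω, (E.indicator q x) * w x) := by
  have hDae : ∀ᵐ x ∂(volume.restrict Ω), x ∈ Dn := by
    rw [ae_restrict_iff' hΩm]
    have : {x | ¬(x ∈ Ω → x ∈ Dn)} ⊆ Ω \ Dn := fun x hx => by
      by_cases h1 : x ∈ Ω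
      · exact ⟨h1, fun h2 => hx (fun _ => h2)⟩
      · exact absurd (fun h => absurd h h1) hx
    exact measure_mono_null this hDnull
  have hwnn : ∀ᵐ x ∂(volume.restrict Ω), 0 ≤ w x := by
    filter_upwards [hDae] with x hx using hwpos x hx
  have hEae : (E ∩ Dn : Set (Euc N)) =ᵐ[volume] E := by
    rw [Filter.eventuallyEq_set]
    have : {x | ¬((x ∈ E ∩ Dn) ↔ x ∈ E)} ⊆ Ω \ Dn := by
      intro x hx
      simp only [Set.mem_setOf_eq, Set.mem_inter_iff] at hx
      by_cases hxE : x ∈ E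
      · by_cases hxD : x ∈ Dn
        · exact absurd ⟨fun h => h.1, fun h => ⟨h, hxD⟩⟩ hx
        · exact ⟨hEΩ hxE, hxD⟩
      · exact absurd ⟨fun h => h.1, fun h => absurd h hxE⟩ hx
    rw [Filter.eventually_iff, ← Filter.eventually_iff]
    rw [ae_iff]
    exact measure_mono_null this hDnull
  rw [setLIntegral_congr hEae, setlint_sub hE hEΩ]
  have hpt : ∀ x, E.indicator (fun x => ENNReal.ofReal (w x) * ENNReal.ofReal (q x)) x
      = ENNReal.ofReal (w x) * ENNReal.ofReal (E.indicator q x) := by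
    intro x
    by_cases hx : x ∈ E
    · simp [Set.indicator_of_mem hx]
    · simp [Set.indicator_of_notMem hx]
  simp only [hpt]
  exact lint_mul_eq_ofReal hwint hwnn (hq.indicator hE) (C := max c 0)
    (fun x => by
      by_cases hx : x ∈ E
      · simp only [Set.indicator_of_mem hx]; exact hqnn x
      · simp only [Set.indicator_of_notMem hx]; exact le_rfl)
    (fun x => by
      by_cases hx : x ∈ E
      · simp only [Set.indicator_of_mem hx]; exact (hqbd x).trans (le_max_left _ _)
      · simp only [Set.indicator_of_notMem hx]; exact le_max_of_le_right le_rfl)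

/-- Bounded continuous extension (Tietze) of a continuous inverse defined on a compact set. -/
lemma extend_cont {K : Set (Euc N)} (hK : IsCompact K) {g : Euc N → Euc N}
    (hg : Continuous (K.restrict g)) {R : ℝ} (hR : 0 < R) (hgR : ∀ x ∈ K, ‖g x‖ ≤ R) :
    ∃ G : Euc N → Euc N, Continuous G ∧ (∀ x, ‖G x‖ ≤ R) ∧ ∀ x ∈ K, G x = g x := by
  set f : C(K, Euc N) := ⟨fun k => R⁻¹ • g k, ((continuous_const : Continuous fun _ : K => R⁻¹).smul hg)⟩ with hf
  have hfmem : ∀ k : K, f k ∈ Metric.closedBall (0 : Euc N) 1 := by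
    intro k
    rw [Metric.mem_closedBall, dist_zero_right, hf]
    simp only [ContinuousMap.coe_mk]
    rw [norm_smul, norm_inv, Real.norm_eq_abs, abs_of_pos hR]
    rw [inv_mul_le_iff₀ hR, mul_one]
    exact hgR k k.2
  obtain ⟨G₁, hG₁mem, hG₁res⟩ :=
    @ContinuousMap.exists_forall_mem_restrict_eq (Euc N) _ _ K hK.isClosed (Euc N) _ f
      (Metric.closedBall (0 : Euc N) 1) hfmem (Set.instTietzeExtensionUnitClosedBall (𝕜 := ℝ))
  refine ⟨fun ξ => R • G₁ ξ, (continuous_const : Continuous fun _ : Euc N => R).smul G₁.continuous, fun ξ => ?_, fun x hx => ?_⟩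
  · rw [norm_smul, Real.norm_eq_abs, abs_of_pos hR]
    have := hG₁mem ξ
    rw [Metric.mem_closedBall, dist_zero_right] at this
    calc R * ‖G₁ ξ‖ ≤ R * 1 := by
          exact mul_le_mul_of_nonneg_left this hR.le
      _ = R := mul_one R
  · show R • G₁ x = g x
    have : G₁ x = f ⟨x, hx⟩ := by
      have := congrArg (fun (φ : C(K, Euc N)) => φ ⟨x, hx⟩) hG₁res
      simpa using this
    rw [this, hf]
    simp only [ContinuousMap.coe_mk]
    rw [smul_inv_smul₀ hR.ne']


end InvConv

set_option maxHeartbeats 2000000 in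
open InvConv in
/-- Convergence of inverse deformations:
`χ_{im_G(y_n,E)} y_n⁻¹ → χ_{im_G(y,E)} y⁻¹` in `L¹(ℝ^N; ℝ^N)`. -/
theorem convergence_of_inverse_deformations {N : ℕ} (hN : 2 ≤ N)
    (Ω : Set (Euc N)) (hΩo : IsOpen Ω) (hΩb : Bornology.IsBounded Ω)
    (y : ℕ → Euc N → Euc N) (D : ℕ → Set (Euc N)) (f : ℕ → Euc N → Euc N →L[ℝ] Euc N)
    (hadm : ∀ n, AdmissibleDef Ω (D n) (y n) (f n))
    (y₀ : Euc N → Euc N) (D₀ : Set (Euc N)) (f₀ : Euc N → Euc N →L[ℝ] Euc N)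
    (hadm₀ : AdmissibleDef Ω D₀ y₀ f₀)
    (hae : ∀ᵐ x ∂(volume.restrict Ω), Tendsto (fun n => y n x) atTop (𝓝 (y₀ x)))
    (hdet : WeakL1ConvOn Ω (fun n x => (f n x).det) (fun x => (f₀ x).det))
    (E : Set (Euc N)) (hE : MeasurableSet E) (hEΩ : E ⊆ Ω) :
    Tendsto
      (fun n => ∫⁻ ξ,
        (‖(y n '' (E ∩ D n)).indicator (Function.invFunOn (y n) (D n)) ξ
            - (y₀ '' (E ∩ D₀)).indicator (Function.invFunOn y₀ D₀) ξ‖₊ : ℝ≥0∞))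
      atTop (𝓝 0) := by
  classical
  have hΩm : MeasurableSet Ω := hΩo.measurableSet
  have hfin : volume Ω ≠ ⊤ := hΩb.measure_lt_top.ne
  -- a radius bound for Ω
  obtain ⟨R₀, hR₀⟩ := hΩb.subset_closedBall 0
  set R : ℝ := max R₀ 1 with hRdef
  have hR1 : (1:ℝ) ≤ R := le_max_right _ _
  have hRpos : (0:ℝ) < R := lt_of_lt_of_le one_pos hR1
  have hΩR : ∀ x ∈ Ω, ‖x‖ ≤ R := fun x hx => by
    have := hR₀ hx
    rw [Metric.mem_closedBall, dist_zero_right] at this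
    exact this.trans (le_max_left _ _)
  -- weights
  set w : ℕ → Euc N → ℝ := fun n x => (f n x).det with hwdef
  set w₀ : Euc N → ℝ := fun x => (f₀ x).det with hw₀def
  have hwint : ∀ n, IntegrableOn (w n) Ω volume := fun n => (hadm n).2.2.2
  have hw₀int : IntegrableOn w₀ Ω volume := hadm₀.2.2.2
  have hDm : ∀ n, MeasurableSet (D n) := fun n => (hadm n).1.1
  have hD₀m : MeasurableSet D₀ := hadm₀.1.1
  have hDΩ : ∀ n, D n ⊆ Ω := fun n => (hadm n).1.2.1
  have hD₀Ω : D₀ ⊆ Ω := hadm₀.1.2.1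
  have hDnull : ∀ n, volume (Ω \ D n) = 0 := fun n => (hadm n).1.2.2.1
  have hD₀null : volume (Ω \ D₀) = 0 := hadm₀.1.2.2.1
  have hDaegen : ∀ (S : Set (Euc N)), volume (Ω \ S) = 0 →
      ∀ᵐ x ∂(volume.restrict Ω), x ∈ S := by
    intro S hS
    rw [ae_restrict_iff' hΩm]
    refine measure_mono_null (fun x hx => ?_) hS
    by_cases h1 : x ∈ Ω
    · exact ⟨h1, fun h2 => hx (fun _ => h2)⟩
    · exact absurd (fun h => absurd h h1) hx
  have hDae : ∀ n, ∀ᵐ x ∂(volume.restrict Ω), x ∈ D n := fun n => hDaegen _ (hDnull n)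
  have hD₀ae : ∀ᵐ x ∂(volume.restrict Ω), x ∈ D₀ := hDaegen _ hD₀null
  have hnn : ∀ n, ∀ᵐ x ∂(volume.restrict Ω), 0 ≤ w n x := fun n => by
    filter_upwards [hDae n] with x hx using ((hadm n).2.2.1 x hx).le
  have hw₀nn : ∀ᵐ x ∂(volume.restrict Ω), 0 ≤ w₀ x := by
    filter_upwards [hD₀ae] with x hx using (hadm₀.2.2.1 x hx).le
  have hweak : ∀ g : Euc N → ℝ, Measurable g → (∃ C : ℝ, ∀ x, |g x| ≤ C) →
      Tendsto (fun n => ∫ x in Ω, w n x * g x) atTop (𝓝 (∫ x in Ω, w₀ x * g x)) :=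
    fun g hg hb => hdet g hg hb
  -- measurability of the maps
  have hymeasgen : ∀ (Y : Euc N → Euc N) (S : Set (Euc N)), MeasurableSet S → S ⊆ Ω →
      volume (Ω \ S) = 0 → ContinuousOn Y S → AEMeasurable Y (volume.restrict Ω) := by
    intro Y S hSm hSΩ hSnull hc
    have h1 : AEMeasurable Y (volume.restrict S) := hc.aemeasurable hSm
    have hset : S =ᵐ[volume] Ω := by
      rw [ae_eq_set]
      constructor
      · rw [Set.diff_eq_empty.2 hSΩ]; exact measure_empty
      · exact hSnull
    rwa [Measure.restrict_congr_set hset] at h1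
  have hymeas : ∀ n, AEMeasurable (y n) (volume.restrict Ω) := fun n =>
    hymeasgen (y n) (D n) (hDm n) (hDΩ n) (hDnull n) (contOn (hadm n))
  have hy₀meas : AEMeasurable y₀ (volume.restrict Ω) :=
    hymeasgen y₀ D₀ hD₀m hD₀Ω hD₀null (contOn hadm₀)
  -- image sets
  have hsnm : ∀ n, MeasurableSet (E ∩ D n) := fun n => hE.inter (hDm n)
  have hs₀m : MeasurableSet (E ∩ D₀) := hE.inter hD₀m
  set Imn : ℕ → Set (Euc N) := fun n => y n '' (E ∩ D n) with hImndef
  set Im : Set (Euc N) := y₀ '' (E ∩ D₀) with hImdef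
  have hImnm : ∀ n, MeasurableSet (Imn n) := fun n =>
    image_meas (hadm n) (hsnm n) Set.inter_subset_right
  have hImm : MeasurableSet Im := image_meas hadm₀ hs₀m Set.inter_subset_right
  set Fn : ℕ → Euc N → Euc N := fun n => (Imn n).indicator (Function.invFunOn (y n) (D n))
    with hFndef
  set F₀ : Euc N → Euc N := Im.indicator (Function.invFunOn y₀ D₀) with hF₀def
  have hFnmeas : ∀ n, Measurable (Fn n) := fun n =>
    measurable_inv (hadm n) (hsnm n) Set.inter_subset_right
  have hF₀meas : Measurable F₀ := measurable_inv hadm₀ hs₀m Set.inter_subset_right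
  have hFnbd : ∀ n ξ, ‖Fn n ξ‖ ≤ R := by
    intro n ξ
    by_cases hξ : ξ ∈ Imn n
    · rw [hFndef]
      simp only [Set.indicator_of_mem hξ]
      exact hΩR _ (hDΩ n (inv_mem (hadm n) Set.inter_subset_right hξ))
    · rw [hFndef]
      simp only [Set.indicator_of_notMem hξ, norm_zero]
      exact hRpos.le
  have hF₀bd : ∀ ξ, ‖F₀ ξ‖ ≤ R := by
    intro ξ
    by_cases hξ : ξ ∈ Im
    · rw [hF₀def]
      simp only [Set.indicator_of_mem hξ]
      exact hΩR _ (hD₀Ω (inv_mem hadm₀ Set.inter_subset_right hξ))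
    · rw [hF₀def]
      simp only [Set.indicator_of_notMem hξ, norm_zero]
      exact hRpos.le
  -- finite total mass of w₀
  have hWΩfin : (∫⁻ x in Ω, ENNReal.ofReal (w₀ x) ∂volume) ≠ ⊤ := by
    have h1 : (∫⁻ x in Ω, ENNReal.ofReal (w₀ x) ∂volume) ≤ ∫⁻ x in Ω, (‖w₀ x‖₊ : ℝ≥0∞) ∂volume :=
      lintegral_mono fun x => Real.ofReal_le_enorm _
    exact (h1.trans_lt hw₀int.2).ne
  have hVfin : volume Im ≠ ⊤ := by
    have h1 : volume Im = ∫⁻ x in E ∩ D₀, ENNReal.ofReal (w₀ x) ∂volume := by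
      rw [hImdef, ← setLIntegral_one, cov hadm₀ hs₀m Set.inter_subset_right (fun _ => 1)]
      simp [mul_one]
      rfl
    rw [h1]
    refine ne_top_of_le_ne_top hWΩfin ?_
    exact lintegral_mono_set (fun x hx => hEΩ hx.1)
  -- the bridge for each n
  have main_eq : ∀ (n : ℕ) (q : Euc N → ℝ) (c : ℝ), Measurable q → (∀ v, 0 ≤ q v) →
      (∀ v, q v ≤ c) →
      (∫⁻ ξ in Imn n, ENNReal.ofReal (q ξ) ∂volume)
        = ENNReal.ofReal (∫ x in Ω, (E.indicator (fun x => q (y n x)) x) * w n x) := by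
    intro n q c hq hq0 hqc
    rw [hImndef, cov (hadm n) (hsnm n) Set.inter_subset_right (fun ξ => ENNReal.ofReal (q ξ))]
    exact bridge hΩm hE hEΩ (hDΩ n) (hDnull n)
      (fun x hx => ((hadm n).2.2.1 x hx).le) (hwint n)
      (fun x => q (y n x)) (hq.comp_aemeasurable (hymeas n)) (fun x => hq0 _) (fun x => hqc _)
  have main_eq₀ : ∀ (q : Euc N → ℝ) (c : ℝ), Measurable q → (∀ v, 0 ≤ q v) → (∀ v, q v ≤ c) →
      (∫⁻ ξ in Im, ENNReal.ofReal (q ξ) ∂volume)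
        = ENNReal.ofReal (∫ x in Ω, (E.indicator (fun x => q (y₀ x)) x) * w₀ x) := by
    intro q c hq hq0 hqc
    rw [hImdef, cov hadm₀ hs₀m Set.inter_subset_right (fun ξ => ENNReal.ofReal (q ξ))]
    exact bridge hΩm hE hEΩ hD₀Ω hD₀null
      (fun x hx => (hadm₀.2.2.1 x hx).le) hw₀int
      (fun x => q (y₀ x)) (hq.comp_aemeasurable hy₀meas) (fun x => hq0 _) (fun x => hqc _)
  -- reduce to eventual smallness
  refine ENNReal.tendsto_nhds_zero.2 fun ε hε => ?_
  obtain ⟨r, hr0, hrε⟩ : ∃ r : ℝ, 0 < r ∧ ENNReal.ofReal r ≤ ε := by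
    rcases eq_or_ne ε ⊤ with h | h
    · exact ⟨1, one_pos, by rw [h]; exact le_top⟩
    · exact ⟨ε.toReal, ENNReal.toReal_pos hε.ne' h, by rw [ENNReal.ofReal_toReal h]⟩
  set εs : ℝ := r / (20 * R) with hεsdef
  have hεspos : 0 < εs := div_pos hr0 (by positivity)
  -- absolute continuity choice
  obtain ⟨δ, hδpos, hδ⟩ := exists_pos_setLIntegral_lt_of_measure_lt
    (μ := volume.restrict Ω) (f := fun x => ENNReal.ofReal (w₀ x)) hWΩfin
    (ε := ENNReal.ofReal εs) (ENNReal.ofReal_pos.2 hεspos).ne'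
  -- compact subset K of E ∩ D₀
  have hs₀fin : volume (E ∩ D₀) ≠ ⊤ :=
    (measure_mono (fun x hx => hEΩ hx.1)).trans_lt hfin.lt_top |>.ne
  obtain ⟨K, hKsub, hKco, hKlt⟩ := hs₀m.exists_isCompact_lt_add (μ := volume) hs₀fin hδpos.ne'
  have hKm : MeasurableSet K := hKco.measurableSet
  have hKfin : volume K ≠ ⊤ := ((measure_mono hKsub).trans_lt hs₀fin.lt_top).ne
  have hKdiff : volume ((E ∩ D₀) \ K) < δ :=
    measure_sdiff_lt_of_lt_add hKm.nullMeasurableSet hKsub hKfin hKlt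
  have hKw : (∫⁻ x in (E ∩ D₀) \ K, ENNReal.ofReal (w₀ x) ∂volume) < ENNReal.ofReal εs := by
    have hsub : (E ∩ D₀) \ K ⊆ Ω := fun x hx => hEΩ hx.1.1
    have hme : MeasurableSet ((E ∩ D₀) \ K) := hs₀m.diff hKm
    have h1 := hδ ((E ∩ D₀) \ K)
      (lt_of_le_of_lt (Measure.restrict_apply_le _ _) hKdiff)
    rwa [Measure.restrict_restrict hme, Set.inter_eq_self_of_subset_left hsub] at h1
  -- image of K and bounded continuous extension of the inverse
  set ImK : Set (Euc N) := y₀ '' K with hImKdef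
  have hKD₀ : K ⊆ D₀ := hKsub.trans Set.inter_subset_right
  have hImKco : IsCompact ImK := hKco.image_of_continuousOn ((contOn hadm₀).mono hKD₀)
  have hImKsub : ImK ⊆ Im := Set.image_mono hKsub
  have hImKm : MeasurableSet ImK := hImKco.measurableSet
  have hImdiff : volume (Im \ ImK) < ENNReal.ofReal εs := by
    have him : Im \ ImK = y₀ '' ((E ∩ D₀) \ K) := by
      ext ξ
      constructor
      · rintro ⟨⟨x, hx, rfl⟩, hnot⟩
        exact ⟨x, ⟨hx, fun hxK => hnot (Set.mem_image_of_mem _ hxK)⟩, rfl⟩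
      · rintro ⟨x, ⟨hx, hxK⟩, rfl⟩
        refine ⟨Set.mem_image_of_mem _ hx, ?_⟩
        rintro ⟨k, hk, hky⟩
        exact hxK (by rwa [hadm₀.2.1 (hKD₀ hk) hx.2 hky] at hk)
    rw [him, ← setLIntegral_one,
      cov hadm₀ (hs₀m.diff hKm) (fun x hx => hx.1.2) (fun _ => 1)]
    simp only [mul_one]
    exact hKw
  -- continuity of the inverse on ImK
  haveI : CompactSpace K := isCompact_iff_compactSpace.1 hKco
  have hyKc : Continuous (fun k : K => y₀ (k : Euc N)) :=
    ((contOn hadm₀).mono hKD₀).restrict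
  have heKbij : Function.Bijective
      (fun k : K => (⟨y₀ (k : Euc N), Set.mem_image_of_mem _ k.2⟩ : ImK)) := by
    constructor
    · intro a b hab
      exact Subtype.ext (hadm₀.2.1 (hKD₀ a.2) (hKD₀ b.2) (congrArg Subtype.val hab))
    · rintro ⟨ξ, hξ⟩
      obtain ⟨k, hk, hky⟩ := hξ
      exact ⟨⟨k, hk⟩, Subtype.ext hky⟩
  set eK : K ≃ ImK := Equiv.ofBijective _ heKbij with heKdef
  have heKcont : Continuous eK := Continuous.subtype_mk hyKc _
  set homeo : K ≃ₜ ImK := Continuous.homeoOfEquivCompactToT2 heKcont with hhomeo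
  have hinvcont : Continuous (ImK.restrict (Function.invFunOn y₀ D₀)) := by
    have heq : ImK.restrict (Function.invFunOn y₀ D₀)
        = fun ξ : ImK => ((homeo.symm ξ : K) : Euc N) := by
      funext ξ
      have h1 : homeo (homeo.symm ξ) = ξ := homeo.apply_symm_apply ξ
      have h2 : y₀ ((homeo.symm ξ : K) : Euc N) = (ξ : Euc N) :=
        congrArg Subtype.val h1
      have h3 : ((homeo.symm ξ : K) : Euc N) ∈ D₀ := hKD₀ (homeo.symm ξ).2
      show Function.invFunOn y₀ D₀ (ξ : Euc N) = _
      rw [← h2, left_inv hadm₀ h3]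
    rw [heq]
    exact continuous_subtype_val.comp homeo.symm.continuous
  obtain ⟨gb, hgbcont, hgbR, hgbeq⟩ := extend_cont hImKco hinvcont hRpos
    (fun ξ hξ => hΩR _ (hD₀Ω (inv_mem hadm₀ hKD₀ hξ)))
  -- open superset U of Im
  obtain ⟨U, hImU, hUo, hUlt⟩ := Set.exists_isOpen_lt_add Im hVfin
    (ENNReal.ofReal_pos.2 hεspos).ne'
  have hUdiff : volume (U \ Im) < ENNReal.ofReal εs :=
    measure_sdiff_lt_of_lt_add hImm.nullMeasurableSet hImU hVfin hUlt
    -- (E1): mass of Imn inside Uᶜ is eventually small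
  have hzero : ∀ᵐ x ∂(volume.restrict Ω), x ∈ E → y₀ x ∉ Uᶜ := by
    filter_upwards [hD₀ae] with x hx hxE
    rw [Set.notMem_compl_iff]
    exact hImU (Set.mem_image_of_mem _ ⟨hxE, hx⟩)
  have EV1 : ∀ᶠ n in atTop, (∫ x in Ω,
      (E.indicator (fun x => (Uᶜ).indicator (fun _ => (1:ℝ)) (y n x)) x) * w n x) < εs :=
    closed_small hΩm hfin hwint hw₀int hnn hweak hymeas hae hE hUo.isClosed_compl hzero hεspos
  have hUcm : MeasurableSet (Uᶜ : Set (Euc N)) := hUo.isClosed_compl.measurableSet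
  have hq1meas : Measurable ((Uᶜ : Set (Euc N)).indicator (fun _ => (1:ℝ))) :=
    measurable_const.indicator hUcm
  have volUc : ∀ n, volume (Imn n ∩ Uᶜ)
      = ENNReal.ofReal (∫ x in Ω,
        (E.indicator (fun x => (Uᶜ).indicator (fun _ => (1:ℝ)) (y n x)) x) * w n x) := by
    intro n
    rw [← main_eq n ((Uᶜ : Set (Euc N)).indicator (fun _ => (1:ℝ))) 1 hq1meas
      (fun v => by by_cases h : v ∈ (Uᶜ : Set (Euc N)) <;> simp [h])
      (fun v => by by_cases h : v ∈ (Uᶜ : Set (Euc N)) <;> simp [h])]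
    calc volume (Imn n ∩ Uᶜ) = volume.restrict (Imn n) Uᶜ := by
          rw [Measure.restrict_apply hUcm, Set.inter_comm]
      _ = (1:ℝ≥0∞) * volume.restrict (Imn n) Uᶜ := (one_mul _).symm
      _ = ∫⁻ ξ in Imn n, (Uᶜ : Set (Euc N)).indicator (fun _ => (1:ℝ≥0∞)) ξ ∂volume :=
          (lintegral_indicator_const hUcm 1).symm
      _ = ∫⁻ ξ in Imn n,
            ENNReal.ofReal ((Uᶜ : Set (Euc N)).indicator (fun _ => (1:ℝ)) ξ) ∂volume := by
          refine lintegral_congr fun ξ => ?_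
          by_cases h : ξ ∈ (Uᶜ : Set (Euc N)) <;> simp [h]
  have EV1' : ∀ᶠ n in atTop, volume (Imn n ∩ Uᶜ) ≤ ENNReal.ofReal εs := by
    filter_upwards [EV1] with n hn
    rw [volUc n]
    exact ENNReal.ofReal_le_ofReal hn.le
  -- convergence of image volumes
  set gE : Euc N → ℝ := E.indicator (fun _ => (1:ℝ)) with hgEdef
  have hgEmeas : Measurable gE := measurable_const.indicator hE
  have hgE01 : ∀ v, 0 ≤ gE v ∧ gE v ≤ 1 := fun v => by
    by_cases h : v ∈ E <;> simp [hgEdef, h]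
  set an : ℕ → ℝ := fun n => ∫ x in Ω, gE x * w n x with handef
  set a₀ : ℝ := ∫ x in Ω, gE x * w₀ x with ha₀def
  have hvoln : ∀ n, volume (Imn n) = ENNReal.ofReal (an n) := by
    intro n
    have h1 := main_eq n (fun _ => (1:ℝ)) 1 measurable_const (fun _ => zero_le_one)
      (fun _ => le_rfl)
    have h2 : (∫⁻ ξ in Imn n, ENNReal.ofReal ((fun _ => (1:ℝ)) ξ) ∂volume) = volume (Imn n) := by
      simp only [ENNReal.ofReal_one]
      exact setLIntegral_one _
    rw [← h2, h1, handef]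
  have hvol₀ : volume Im = ENNReal.ofReal a₀ := by
    have h1 := main_eq₀ (fun _ => (1:ℝ)) 1 measurable_const (fun _ => zero_le_one)
      (fun _ => le_rfl)
    have h2 : (∫⁻ ξ in Im, ENNReal.ofReal ((fun _ => (1:ℝ)) ξ) ∂volume) = volume Im := by
      simp only [ENNReal.ofReal_one]
      exact setLIntegral_one _
    rw [← h2, h1, ha₀def]
  have han0 : ∀ n, 0 ≤ an n := fun n => integral_nonneg_of_ae (by
    filter_upwards [hnn n] with x hx
    exact mul_nonneg (hgE01 x).1 hx)
  have hcomm : ∀ u : Euc N → ℝ, (∫ x in Ω, gE x * u x) = ∫ x in Ω, u x * gE x := fun u =>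
    integral_congr_ae (Eventually.of_forall fun x => mul_comm _ _)
  have hatend : Tendsto an atTop (𝓝 a₀) := by
    have h := hweak gE hgEmeas ⟨1, fun x => by
      rw [abs_of_nonneg (hgE01 x).1]; exact (hgE01 x).2⟩
    rw [← hcomm w₀] at h
    exact h.congr fun n => (hcomm (w n)).symm
  have EV2 : ∀ᶠ n in atTop, |an n - a₀| < εs := by
    have := Metric.tendsto_nhds.1 hatend εs hεspos
    simpa [Real.dist_eq] using this
  -- main term via key_limit
  set qM : ℕ → Euc N → ℝ := fun n ξ => ‖Fn n ξ - gb ξ‖ with hqMdef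
  have hqMmeas : ∀ n, Measurable (qM n) := fun n =>
    ((hFnmeas n).sub hgbcont.measurable).norm
  have hqMbd : ∀ n ξ, qM n ξ ≤ 2 * R := by
    intro n ξ
    calc ‖Fn n ξ - gb ξ‖ ≤ ‖Fn n ξ‖ + ‖gb ξ‖ := norm_sub_le _ _
      _ ≤ R + R := add_le_add (hFnbd n ξ) (hgbR ξ)
      _ = 2 * R := by ring
  set hMn : ℕ → Euc N → ℝ := fun n x => E.indicator (fun x => qM n (y n x)) x with hhMdef
  have hMeq : ∀ n, (∫⁻ ξ in Imn n, (‖Fn n ξ - gb ξ‖₊ : ℝ≥0∞) ∂volume)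
      = ENNReal.ofReal (∫ x in Ω, hMn n x * w n x) := by
    intro n
    rw [← main_eq n (qM n) (2*R) (hqMmeas n) (fun v => norm_nonneg _) (fun v => hqMbd n v)]
    exact lintegral_congr fun ξ => (ofReal_norm _).symm
  set hM₀ : Euc N → ℝ := fun x => E.indicator (fun x => ‖x - gb (y₀ x)‖) x with hhM₀def
  have hDallae : ∀ᵐ x ∂(volume.restrict Ω), ∀ n, x ∈ D n := ae_all_iff.2 hDae
  have htendM : ∀ᵐ x ∂(volume.restrict Ω),
      Tendsto (fun n => hMn n x) atTop (𝓝 (hM₀ x)) := by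
    filter_upwards [hDallae, hae] with x hDx hyx
    by_cases hxE : x ∈ E
    · simp only [hhMdef, hhM₀def, Set.indicator_of_mem hxE]
      have hcont : Continuous (fun ξ : Euc N => ‖x - gb ξ‖) :=
        (continuous_const.sub hgbcont).norm
      have h1 : Tendsto (fun n => ‖x - gb (y n x)‖) atTop (𝓝 (‖x - gb (y₀ x)‖)) :=
        (hcont.tendsto _).comp hyx
      refine h1.congr fun n => ?_
      have hxmem : x ∈ E ∩ D n := ⟨hxE, hDx n⟩
      have hFnx : Fn n (y n x) = x := by
        rw [hFndef]
        simp only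
        rw [Set.indicator_of_mem (Set.mem_image_of_mem _ hxmem), left_inv (hadm n) (hDx n)]
      rw [hqMdef]
      simp only
      rw [hFnx]
    · simp only [hhMdef, hhM₀def, Set.indicator_of_notMem hxE]
      exact tendsto_const_nhds
  have hMmeas : ∀ n, AEMeasurable (hMn n) (volume.restrict Ω) := fun n =>
    ((hqMmeas n).comp_aemeasurable (hymeas n)).indicator hE
  have hMbd : ∀ n x, |hMn n x| ≤ 2 * R := by
    intro n x
    by_cases hxE : x ∈ E
    · rw [hhMdef]
      simp only [Set.indicator_of_mem hxE]
      rw [abs_of_nonneg (norm_nonneg _)]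
      exact hqMbd n _
    · rw [hhMdef]
      simp only [Set.indicator_of_notMem hxE, abs_zero]
      positivity
  have hKL := key_limit hΩm hfin hwint hw₀int hnn hweak (C := 2*R) (by positivity)
    hMmeas hMbd htendM
  set L : ℝ := ∫ x in Ω, hM₀ x * w₀ x with hLdef
  -- bound on L
  set q2 : Euc N → ℝ := (E \ K).indicator (fun _ => (1:ℝ)) with hq2def
  have hq2meas : Measurable q2 := measurable_const.indicator (hE.diff hKm)
  have h01 : ∀ x, 0 ≤ q2 x ∧ q2 x ≤ 1 := fun x => by
    by_cases h : x ∈ E \ K <;> simp [hq2def, h]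
  have hint2 : Integrable (fun x => q2 x * w₀ x) (volume.restrict Ω) :=
    hw₀int.bdd_mul (c := 1) hq2meas.aestronglyMeasurable
      (Eventually.of_forall fun x => by
        rw [Real.norm_eq_abs, abs_of_nonneg (h01 x).1]; exact (h01 x).2)
  have hI2 : (∫ x in Ω, q2 x * w₀ x) < εs := by
    have hnn2 : 0 ≤ᵐ[volume.restrict Ω] fun x => q2 x * w₀ x := by
      filter_upwards [hw₀nn] with x hx
      exact mul_nonneg (h01 x).1 hx
    have heq : ENNReal.ofReal (∫ x in Ω, q2 x * w₀ x)
        = ∫⁻ x, ENNReal.ofReal (q2 x * w₀ x) ∂(volume.restrict Ω) :=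
      ofReal_integral_eq_lintegral_ofReal hint2 hnn2
    have hle1 : (∫⁻ x, ENNReal.ofReal (q2 x * w₀ x) ∂(volume.restrict Ω))
        ≤ ∫⁻ x, (E \ K).indicator (fun x => ENNReal.ofReal (w₀ x)) x ∂(volume.restrict Ω) := by
      refine lintegral_mono fun x => ?_
      by_cases h : x ∈ E \ K
      · rw [Set.indicator_of_mem h]
        rw [hq2def]
        simp only [Set.indicator_of_mem h, one_mul]
        exact le_rfl
      · rw [Set.indicator_of_notMem h, hq2def]
        simp [Set.indicator_of_notMem h]
    have hle2 : (∫⁻ x, (E \ K).indicator (fun x => ENNReal.ofReal (w₀ x)) x ∂(volume.restrict Ω))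
        < ENNReal.ofReal εs := by
      rw [lintegral_indicator (hE.diff hKm), Measure.restrict_restrict (hE.diff hKm),
        Set.inter_eq_self_of_subset_left (fun x (hx : x ∈ E \ K) => hEΩ hx.1)]
      have hsetae : (E \ K : Set (Euc N)) =ᵐ[volume] (((E ∩ D₀) \ K : Set (Euc N))) := by
        rw [ae_eq_set]
        constructor
        · refine measure_mono_null (fun x hx => ?_) hD₀null
          rcases hx with ⟨⟨hxE, hxK⟩, hnot⟩
          refine ⟨hEΩ hxE, fun hxD₀ => hnot ⟨⟨hxE, hxD₀⟩, hxK⟩⟩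
        · have hemp : ((E ∩ D₀) \ K) \ (E \ K) = ∅ := by
            ext x
            simp only [Set.mem_diff, Set.mem_empty_iff_false, iff_false]
            rintro ⟨⟨⟨h1, _⟩, h3⟩, h4⟩
            exact h4 ⟨h1, h3⟩
          rw [hemp]
          exact measure_empty
      rw [setLIntegral_congr hsetae]
      exact hKw
    have hfinal : ENNReal.ofReal (∫ x in Ω, q2 x * w₀ x) < ENNReal.ofReal εs := by
      rw [heq]
      exact lt_of_le_of_lt hle1 hle2
    exact (ENNReal.ofReal_lt_ofReal_iff hεspos).1 hfinal
  have hM₀meas : AEMeasurable hM₀ (volume.restrict Ω) := by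
    have h1 : AEMeasurable (fun x : Euc N => ‖x - gb (y₀ x)‖) (volume.restrict Ω) :=
      (aemeasurable_id.sub (hgbcont.measurable.comp_aemeasurable hy₀meas)).norm
    exact h1.indicator hE
  have hM₀bd : ∀ x, |hM₀ x| ≤ 2 * R := by
    intro x
    by_cases hxE : x ∈ E
    · rw [hhM₀def]
      simp only [Set.indicator_of_mem hxE]
      rw [abs_of_nonneg (norm_nonneg _)]
      calc ‖x - gb (y₀ x)‖ ≤ ‖x‖ + ‖gb (y₀ x)‖ := norm_sub_le _ _
        _ ≤ R + R := add_le_add (hΩR x (hEΩ hxE)) (hgbR _)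
        _ = 2 * R := by ring
    · rw [hhM₀def]
      simp only [Set.indicator_of_notMem hxE, abs_zero]
      positivity
  have hIntM₀ : Integrable (fun x => hM₀ x * w₀ x) (volume.restrict Ω) :=
    hw₀int.bdd_mul (c := 2*R) hM₀meas.aestronglyMeasurable
      (Eventually.of_forall fun x => by
        rw [Real.norm_eq_abs]; exact hM₀bd x)
  have hLbd : L ≤ 2 * R * εs := by
    have hmono : L ≤ ∫ x in Ω, (2*R) * (q2 x * w₀ x) := by
      refine integral_mono_ae hIntM₀ (hint2.const_mul _) ?_
      filter_upwards [hw₀nn, hD₀ae] with x hw hxD₀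
      by_cases hxE : x ∈ E
      · by_cases hxK : x ∈ K
        · have hzero' : hM₀ x = 0 := by
            rw [hhM₀def]
            simp only [Set.indicator_of_mem hxE]
            have hmemK : y₀ x ∈ ImK := Set.mem_image_of_mem _ hxK
            rw [hgbeq _ hmemK, left_inv hadm₀ (hKD₀ hxK), sub_self, norm_zero]
          have hq2z : q2 x = 0 := by
            rw [hq2def]
            exact Set.indicator_of_notMem (fun h => h.2 hxK) _
          rw [hzero', hq2z]
          simp
        · have hq2o : q2 x = 1 := by
            rw [hq2def]
            exact Set.indicator_of_mem (show x ∈ E \ K from ⟨hxE, hxK⟩) _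
          rw [hq2o, one_mul]
          refine mul_le_mul_of_nonneg_right ?_ hw
          have := hM₀bd x
          exact (le_abs_self _).trans this
      · have hz : hM₀ x = 0 := by
          rw [hhM₀def]; exact Set.indicator_of_notMem hxE _
        have hq2z : q2 x = 0 := by
          rw [hq2def]
          exact Set.indicator_of_notMem (fun h => hxE h.1) _
        rw [hz, hq2z]
        simp
    calc L ≤ ∫ x in Ω, (2*R) * (q2 x * w₀ x) := hmono
      _ = (2*R) * ∫ x in Ω, q2 x * w₀ x := integral_const_mul _ _
      _ ≤ 2 * R * εs := mul_le_mul_of_nonneg_left hI2.le (by positivity)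
  have EV3 : ∀ᶠ n in atTop, (∫ x in Ω, hMn n x * w n x) < (2*R + 1) * εs := by
    have h1 := Metric.tendsto_nhds.1 hKL εs hεspos
    filter_upwards [h1] with n hn
    rw [Real.dist_eq] at hn
    have h2 : (∫ x in Ω, hMn n x * w n x) - L < εs := (le_abs_self _).trans_lt hn
    linarith
  -- final assembly
  filter_upwards [EV1', EV2, EV3] with n e1 e2 e3
  have hb1 : volume (Imn n \ Im) ≤ ENNReal.ofReal εs + ENNReal.ofReal εs := by
    have hsub : Imn n \ Im ⊆ (Imn n ∩ Uᶜ) ∪ (U \ Im) := by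
      intro ξ hξ
      by_cases hU : ξ ∈ U
      · exact Or.inr ⟨hU, hξ.2⟩
      · exact Or.inl ⟨hξ.1, hU⟩
    exact (measure_mono hsub).trans ((measure_union_le _ _).trans (add_le_add e1 hUdiff.le))
  have hfinInter : volume (Im ∩ Imn n) ≠ ⊤ :=
    ((measure_mono Set.inter_subset_left).trans_lt hVfin.lt_top).ne
  have hb2 : volume (Im \ Imn n)
      ≤ ENNReal.ofReal εs + ENNReal.ofReal εs + ENNReal.ofReal εs := by
    have hc1 : volume Im ≤ volume (Imn n) + ENNReal.ofReal εs := by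
      rw [hvol₀, hvoln n]
      have habs : a₀ ≤ an n + εs := by
        have h := abs_sub_lt_iff.1 e2
        linarith [h.2]
      calc ENNReal.ofReal a₀ ≤ ENNReal.ofReal (an n + εs) := ENNReal.ofReal_le_ofReal habs
        _ = ENNReal.ofReal (an n) + ENNReal.ofReal εs := ENNReal.ofReal_add (han0 n) hεspos.le
    have hdecomp₀ : volume (Im ∩ Imn n) + volume (Im \ Imn n) = volume Im :=
      measure_inter_add_diff Im (hImnm n)
    have hdecompn : volume (Imn n ∩ Im) + volume (Imn n \ Im) = volume (Imn n) :=
      measure_inter_add_diff (Imn n) hImm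
    have hstep : volume (Im ∩ Imn n) + volume (Im \ Imn n)
        ≤ volume (Im ∩ Imn n)
          + (ENNReal.ofReal εs + ENNReal.ofReal εs + ENNReal.ofReal εs) := by
      rw [hdecomp₀]
      calc volume Im ≤ volume (Imn n) + ENNReal.ofReal εs := hc1
        _ = volume (Imn n ∩ Im) + volume (Imn n \ Im) + ENNReal.ofReal εs := by
            rw [hdecompn]
        _ ≤ volume (Imn n ∩ Im) + (ENNReal.ofReal εs + ENNReal.ofReal εs)
              + ENNReal.ofReal εs := by
            exact add_le_add_left (add_le_add_right hb1 _) _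
        _ = volume (Im ∩ Imn n)
              + (ENNReal.ofReal εs + ENNReal.ofReal εs + ENNReal.ofReal εs) := by
            rw [Set.inter_comm, add_assoc]
    exact (ENNReal.add_le_add_iff_left hfinInter).1 hstep
  have hb3 : volume (Imn n \ ImK)
      ≤ ENNReal.ofReal εs + ENNReal.ofReal εs + ENNReal.ofReal εs := by
    have hsub : Imn n \ ImK ⊆ (Imn n \ Im) ∪ (Im \ ImK) := by
      intro ξ hξ
      by_cases hIm' : ξ ∈ Im
      · exact Or.inr ⟨hIm', hξ.2⟩
      · exact Or.inl ⟨hξ.1, hIm'⟩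
    exact (measure_mono hsub).trans ((measure_union_le _ _).trans (add_le_add hb1 hImdiff.le))
  have hMbound : (∫⁻ ξ in Imn n, (‖Fn n ξ - gb ξ‖₊ : ℝ≥0∞) ∂volume)
      ≤ ENNReal.ofReal ((2*R+1) * εs) := by
    rw [hMeq n]
    exact ENNReal.ofReal_le_ofReal e3.le
  have pw : ∀ ξ, (‖Fn n ξ - F₀ ξ‖₊ : ℝ≥0∞)
      ≤ (Imn n).indicator (fun ζ => (‖Fn n ζ - gb ζ‖₊ : ℝ≥0∞)) ξ
        + (Imn n \ ImK).indicator (fun _ => ENNReal.ofReal (2*R)) ξ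
        + (Im \ Imn n).indicator (fun _ => ENNReal.ofReal R) ξ := by
    intro ξ
    by_cases h1 : ξ ∈ Imn n
    · rw [Set.indicator_of_mem h1]
      by_cases h2 : ξ ∈ ImK
      · have hIm' : ξ ∈ Im := hImKsub h2
        have hFξ : F₀ ξ = gb ξ := by
          rw [hF₀def]
          rw [Set.indicator_of_mem hIm', ← hgbeq ξ h2]
        rw [hFξ]
        exact le_add_right (le_add_right le_rfl)
      · rw [Set.indicator_of_mem (show ξ ∈ Imn n \ ImK from ⟨h1, h2⟩)]
        have hreal : ‖Fn n ξ - F₀ ξ‖ ≤ ‖Fn n ξ - gb ξ‖ + 2*R := by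
          have htri : ‖Fn n ξ - F₀ ξ‖ ≤ ‖Fn n ξ - gb ξ‖ + ‖gb ξ - F₀ ξ‖ := by
            have heq2 : Fn n ξ - F₀ ξ = (Fn n ξ - gb ξ) + (gb ξ - F₀ ξ) := by abel
            rw [heq2]
            exact norm_add_le _ _
          have h2R : ‖gb ξ - F₀ ξ‖ ≤ 2*R := by
            calc ‖gb ξ - F₀ ξ‖ ≤ ‖gb ξ‖ + ‖F₀ ξ‖ := norm_sub_le _ _
              _ ≤ R + R := add_le_add (hgbR ξ) (hF₀bd ξ)
              _ = 2*R := by ring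
          linarith
        calc (‖Fn n ξ - F₀ ξ‖₊ : ℝ≥0∞) = ENNReal.ofReal ‖Fn n ξ - F₀ ξ‖ :=
              (ofReal_norm _).symm
          _ ≤ ENNReal.ofReal (‖Fn n ξ - gb ξ‖ + 2*R) := ENNReal.ofReal_le_ofReal hreal
          _ = ENNReal.ofReal ‖Fn n ξ - gb ξ‖ + ENNReal.ofReal (2*R) :=
              ENNReal.ofReal_add (norm_nonneg _) (by positivity)
          _ = (‖Fn n ξ - gb ξ‖₊ : ℝ≥0∞) + ENNReal.ofReal (2*R) := by
              rw [ofReal_norm]; rfl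
          _ ≤ _ := le_add_right le_rfl
    · rw [Set.indicator_of_notMem h1]
      have hFn0 : Fn n ξ = 0 := by
        rw [hFndef]
        exact Set.indicator_of_notMem h1 _
      by_cases h3 : ξ ∈ Im
      · rw [Set.indicator_of_mem (show ξ ∈ Im \ Imn n from ⟨h3, h1⟩)]
        have hreal : ‖Fn n ξ - F₀ ξ‖ ≤ R := by
          rw [hFn0, zero_sub, norm_neg]
          exact hF₀bd ξ
        calc (‖Fn n ξ - F₀ ξ‖₊ : ℝ≥0∞) = ENNReal.ofReal ‖Fn n ξ - F₀ ξ‖ :=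
              (ofReal_norm _).symm
          _ ≤ ENNReal.ofReal R := ENNReal.ofReal_le_ofReal hreal
          _ ≤ _ := le_add_self
      · have hF₀0 : F₀ ξ = 0 := by
          rw [hF₀def]
          exact Set.indicator_of_notMem h3 _
        rw [hFn0, hF₀0, sub_self]
        simp
  have m1 : Measurable fun ξ => (Imn n).indicator (fun ζ => (‖Fn n ζ - gb ζ‖₊ : ℝ≥0∞)) ξ :=
    (((hFnmeas n).sub hgbcont.measurable).enorm).indicator (hImnm n)
  have m2 : Measurable fun ξ => (Imn n \ ImK).indicator (fun _ => ENNReal.ofReal (2*R)) ξ :=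
    measurable_const.indicator ((hImnm n).diff hImKm)
  have m3 : Measurable fun ξ => (Im \ Imn n).indicator (fun _ => ENNReal.ofReal R) ξ :=
    measurable_const.indicator (hImm.diff (hImnm n))
  have hsum3 : ENNReal.ofReal εs + ENNReal.ofReal εs + ENNReal.ofReal εs
      = ENNReal.ofReal (3 * εs) := by
    rw [← ENNReal.ofReal_add hεspos.le hεspos.le,
      ← ENNReal.ofReal_add (by positivity) hεspos.le]
    congr 1
    ring
  calc (∫⁻ ξ, (‖Fn n ξ - F₀ ξ‖₊ : ℝ≥0∞))
      ≤ ∫⁻ ξ, ((Imn n).indicator (fun ζ => (‖Fn n ζ - gb ζ‖₊ : ℝ≥0∞)) ξ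
          + (Imn n \ ImK).indicator (fun _ => ENNReal.ofReal (2*R)) ξ
          + (Im \ Imn n).indicator (fun _ => ENNReal.ofReal R) ξ) := lintegral_mono pw
    _ = (∫⁻ ξ, (Imn n).indicator (fun ζ => (‖Fn n ζ - gb ζ‖₊ : ℝ≥0∞)) ξ)
          + (∫⁻ ξ, (Imn n \ ImK).indicator (fun _ => ENNReal.ofReal (2*R)) ξ)
          + ∫⁻ ξ, (Im \ Imn n).indicator (fun _ => ENNReal.ofReal R) ξ := by
        rw [lintegral_add_right _ m3, lintegral_add_right _ m2]
    _ = (∫⁻ ξ in Imn n, (‖Fn n ξ - gb ξ‖₊ : ℝ≥0∞) ∂volume)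
          + ENNReal.ofReal (2*R) * volume (Imn n \ ImK)
          + ENNReal.ofReal R * volume (Im \ Imn n) := by
        rw [lintegral_indicator (hImnm n), lintegral_indicator_const ((hImnm n).diff hImKm),
          lintegral_indicator_const (hImm.diff (hImnm n))]
    _ ≤ ENNReal.ofReal ((2*R+1) * εs) + ENNReal.ofReal (2*R) * ENNReal.ofReal (3 * εs)
          + ENNReal.ofReal R * ENNReal.ofReal (3 * εs) := by
        refine add_le_add (add_le_add hMbound ?_) ?_
        · exact mul_le_mul_right (hsum3 ▸ hb3) _
        · exact mul_le_mul_right (hsum3 ▸ hb2) _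
    _ = ENNReal.ofReal ((2*R+1) * εs + (2*R) * (3 * εs) + R * (3 * εs)) := by
        rw [← ENNReal.ofReal_mul (by positivity : (0:ℝ) ≤ 2*R),
          ← ENNReal.ofReal_mul hRpos.le,
          ← ENNReal.ofReal_add (by positivity) (by positivity),
          ← ENNReal.ofReal_add (by positivity) (by positivity)]
    _ ≤ ENNReal.ofReal r := by
        refine ENNReal.ofReal_le_ofReal ?_
        have hring : (2*R+1) * εs + (2*R) * (3 * εs) + R * (3 * εs) = (11*R+1) * εs := by
          ring
        rw [hring, hεsdef]
        rw [mul_div_assoc']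
        rw [div_le_iff₀ (by positivity : (0:ℝ) < 20*R)]
        nlinarith [hr0.le, hR1]
    _ ≤ ε := hrε
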